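/- Let {A_n} be a sequence of matrices with A_n of size d_n × d_n, d_n → ∞. If there exists p ∈ [1, ∞) such that ‖A_n‖_p / d_n^{1/p} → 0 as n → ∞ (where ‖·‖_p is the Schatten p-norm), then for every continuous compactly supported F : ℝ → ℝ, (1/d_n) ∑_{i=1}^{d_n} F(σ_i(A_n)) → F(0), i.e. the sequence is zero-distributed in the sense of singular values. -/

import Mathlib

open Matrix
open scoped ComplexOrder Classical

/-- Square root of a matrix: the unique PSD square root when `M` is positive
semidefinite, junk value `0` otherwise. -/
noncomputable def msqrt {m : Type*} [Fintype m] [DecidableEq m] (M : Matrix m m ℂ) :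
    Matrix m m ℂ :=
  if h : M.PosSemidef then
    (h.1.eigenvectorUnitary : Matrix m m ℂ) * diagonal ((↑) ∘ (√·) ∘ h.1.eigenvalues) *
      (star h.1.eigenvectorUnitary : Matrix m m ℂ)
  else 0

/-- The matrix geometric mean `G(A,B) = A^{1/2} (A^{-1/2} B A^{-1/2})^{1/2} A^{1/2}`. -/
noncomputable def matGM {m : Type*} [Fintype m] [DecidableEq m] (A B : Matrix m m ℂ) :
    Matrix m m ℂ :=
  msqrt A * msqrt ((msqrt A)⁻¹ * B * (msqrt A)⁻¹) * msqrt A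

/-- Singular values of a square complex matrix: the eigenvalues of `(MᴴM)^{1/2}`. -/
noncomputable def singVals {m : Type*} [Fintype m] [DecidableEq m] (M : Matrix m m ℂ) :
    m → ℝ :=
  if h : (msqrt (Mᴴ * M)).IsHermitian then h.eigenvalues else 0

/-- Spectral (operator) norm of a square complex matrix: the largest singular value. -/
noncomputable def specNorm {m : Type*} [Fintype m] [DecidableEq m] (M : Matrix m m ℂ) : ℝ :=
  ⨆ i, singVals M i

/-- Schatten `p`-norm: the `ℓ^p` norm of the vector of singular values. -/
noncomputable def schattenNorm {m : Type*} [Fintype m] [DecidableEq m] (p : ℝ)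
    (M : Matrix m m ℂ) : ℝ :=
  (∑ i, singVals M i ^ p) ^ (1 / p)

lemma singVals_nonneg {m : Type*} [Fintype m] [DecidableEq m] (M : Matrix m m ℂ) (i : m) :
    0 ≤ singVals M i := by
  have hps : (Mᴴ * M).PosSemidef := Matrix.posSemidef_conjTranspose_mul_self M
  have hs : (msqrt (Mᴴ * M)).PosSemidef := by
    rw [msqrt, dif_pos hps]; exact (Matrix.PosSemidef.diagonal (fun i => Complex.zero_le_real.mpr (Real.sqrt_nonneg _))).mul_mul_conjTranspose_same _
  rw [singVals, dif_pos hs.isHermitian]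
  exact hs.eigenvalues_nonneg i

open Filter in
theorem stmt10 {d : ℕ → ℕ} (hd : StrictMono d)
    (A : ∀ k, Matrix (Fin (d k)) (Fin (d k)) ℂ) {p : ℝ} (hp : 1 ≤ p)
    (h : Tendsto (fun k => schattenNorm p (A k) / (d k : ℝ) ^ (1 / p)) atTop (nhds 0)) :
    ∀ F : ℝ → ℝ, Continuous F → HasCompactSupport F →
      Tendsto (fun k => (1 / (d k : ℝ)) * ∑ i, F (singVals (A k) i)) atTop (nhds (F 0)) := by
  intro F hF hFc
  have hp0 : (0:ℝ) < p := lt_of_lt_of_le one_pos hp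
  set S : ℕ → ℝ := fun k => ∑ i, singVals (A k) i ^ p with hS
  have hSnn : ∀ k, 0 ≤ S k := fun k =>
    Finset.sum_nonneg fun i _ => Real.rpow_nonneg (singVals_nonneg _ i) p
  have hdk : ∀ k, 1 ≤ k → (1:ℝ) ≤ (d k : ℝ) := fun k hk => by
    exact_mod_cast le_trans hk (hd.le_apply)
  -- Step A : S k / d k → 0
  have hA : Tendsto (fun k => S k / (d k : ℝ)) atTop (nhds 0) := by
    have h1 : Tendsto (fun k => (schattenNorm p (A k) / (d k : ℝ) ^ (1 / p)) ^ p)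
        atTop (nhds 0) := by
      have := (Real.continuousAt_rpow_const 0 p (Or.inr hp0.le)).tendsto.comp h
      simpa [Function.comp_def, Real.zero_rpow hp0.ne'] using this
    refine h1.congr' ?_
    filter_upwards [eventually_ge_atTop 1] with k hk
    have hd1 : (1:ℝ) ≤ (d k : ℝ) := hdk k hk
    have hd0 : (0:ℝ) < (d k : ℝ) := lt_of_lt_of_le one_pos hd1
    have hnn : 0 ≤ S k / (d k : ℝ) := div_nonneg (hSnn k) hd0.le
    rw [schattenNorm, ← Real.div_rpow (hSnn k) hd0.le, ← Real.rpow_mul hnn,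
      one_div, inv_mul_cancel₀ hp0.ne', Real.rpow_one]
  -- Step B
  rw [Metric.tendsto_atTop]
  intro ε hε
  obtain ⟨C, hC⟩ := hF.bounded_above_of_compact_support hFc
  have hC0 : 0 ≤ C := le_trans (norm_nonneg _) (hC 0)
  obtain ⟨δ, hδ0, hδ⟩ := Metric.continuousAt_iff.mp (hF.continuousAt (x := 0)) (ε/2) (half_pos hε)
  have hδp : (0:ℝ) < δ ^ p := Real.rpow_pos_of_pos hδ0 p
  have hKpos : (0:ℝ) < ε/2 * δ ^ p / (2*C+1) := by positivity
  obtain ⟨N, hN⟩ := (Metric.tendsto_atTop.mp hA) (ε/2 * δ ^ p / (2*C+1)) hKpos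
  refine ⟨max N 1, fun k hk => ?_⟩
  have hk1 : 1 ≤ k := le_trans (le_max_right N 1) hk
  have hkN : N ≤ k := le_trans (le_max_left N 1) hk
  have hd1 : (1:ℝ) ≤ (d k : ℝ) := hdk k hk1
  have hd0 : (0:ℝ) < (d k : ℝ) := lt_of_lt_of_le one_pos hd1
  have hSd : S k / (d k : ℝ) < ε/2 * δ ^ p / (2*C+1) := by
    have := hN k hkN
    rwa [Real.dist_eq, sub_zero, abs_of_nonneg (div_nonneg (hSnn k) hd0.le)] at this
  -- pointwise bound
  have hpt : ∀ i : Fin (d k), |F (singVals (A k) i) - F 0| ≤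
      ε/2 + (2*C / δ ^ p) * singVals (A k) i ^ p := by
    intro i
    set σ := singVals (A k) i with hσ
    have hσ0 : 0 ≤ σ := singVals_nonneg _ i
    rcases lt_or_ge σ δ with hlt | hge
    · have : |F σ - F 0| < ε/2 := by
        have := hδ (show dist σ 0 < δ by rwa [Real.dist_eq, sub_zero, abs_of_nonneg hσ0])
        rwa [Real.dist_eq] at this
      have hnn : 0 ≤ (2*C / δ ^ p) * σ ^ p := by positivity
      linarith
    · have h2C : |F σ - F 0| ≤ 2*C := by
        calc |F σ - F 0| ≤ |F σ| + |F 0| := abs_sub _ _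
        _ ≤ C + C := add_le_add (hC σ) (hC 0)
        _ = 2*C := by ring
      have hσp : δ ^ p ≤ σ ^ p := Real.rpow_le_rpow hδ0.le hge hp0.le
      have : 2*C ≤ (2*C / δ ^ p) * σ ^ p := by
        rw [div_mul_eq_mul_div, le_div_iff₀ hδp]
        exact mul_le_mul_of_nonneg_left hσp (by positivity)
      linarith [half_pos hε]
  -- sum the bound
  have hsum : ∑ i, |F (singVals (A k) i) - F 0| ≤
      (d k : ℝ) * (ε/2) + (2*C / δ ^ p) * S k := by
    calc ∑ i, |F (singVals (A k) i) - F 0|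
        ≤ ∑ i : Fin (d k), (ε/2 + (2*C / δ ^ p) * singVals (A k) i ^ p) :=
          Finset.sum_le_sum fun i _ => hpt i
      _ = (d k : ℝ) * (ε/2) + (2*C / δ ^ p) * S k := by
          rw [Finset.sum_add_distrib, Finset.sum_const, ← Finset.mul_sum]
          simp [hS, mul_comm]
  have habs : |(1 / (d k : ℝ)) * ∑ i, F (singVals (A k) i) - F 0| ≤
      (1 / (d k : ℝ)) * ∑ i, |F (singVals (A k) i) - F 0| := by
    have : (1 / (d k : ℝ)) * ∑ i, F (singVals (A k) i) - F 0 =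
        (1 / (d k : ℝ)) * ∑ i : Fin (d k), (F (singVals (A k) i) - F 0) := by
      rw [Finset.sum_sub_distrib, Finset.sum_const]
      field_simp
      simp
    rw [this, abs_mul, abs_of_nonneg (by positivity : (0:ℝ) ≤ 1 / (d k:ℝ))]
    exact mul_le_mul_of_nonneg_left (Finset.abs_sum_le_sum_abs _ _) (by positivity)
  rw [Real.dist_eq]
  have hfin : (1 / (d k : ℝ)) * ((d k : ℝ) * (ε/2) + (2*C / δ ^ p) * S k) < ε := by
    have hterm : (2*C / δ ^ p) * (S k / (d k : ℝ)) < ε/2 := by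
      have h1 : (2*C / δ ^ p) * (S k / (d k : ℝ)) ≤
          (2*C / δ ^ p) * (ε/2 * δ ^ p / (2*C+1)) :=
        mul_le_mul_of_nonneg_left hSd.le (by positivity)
      have h2 : (2*C / δ ^ p) * (ε/2 * δ ^ p / (2*C+1)) < ε/2 := by
        have heq : (2*C / δ ^ p) * (ε/2 * δ ^ p / (2*C+1)) = (2*C/(2*C+1)) * (ε/2) := by
          field_simp
        have hlt : (2*C) / (2*C+1) < 1 := by
          rw [div_lt_one (by positivity)]; linarith
        calc (2*C / δ ^ p) * (ε/2 * δ ^ p / (2*C+1)) = (2*C/(2*C+1)) * (ε/2) := heq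
          _ < 1 * (ε/2) := mul_lt_mul_of_pos_right hlt (half_pos hε)
          _ = ε/2 := one_mul _
      exact lt_of_le_of_lt h1 h2
    have : (1 / (d k : ℝ)) * ((d k : ℝ) * (ε/2) + (2*C / δ ^ p) * S k) =
        ε/2 + (2*C / δ ^ p) * (S k / (d k : ℝ)) := by
      field_simp
    rw [this]; linarith
  calc |(1 / (d k : ℝ)) * ∑ i, F (singVals (A k) i) - F 0|
      ≤ (1 / (d k : ℝ)) * ∑ i, |F (singVals (A k) i) - F 0| := habs
    _ ≤ (1 / (d k : ℝ)) * ((d k : ℝ) * (ε/2) + (2*C / δ ^ p) * S k) :=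
        mul_le_mul_of_nonneg_left hsum (by positivity)
    _ < ε := hfin
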